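/- Let G be a graph with a minimum 3-path vertex cover of size at most k, admitting a vertex partition (A, B, Z) where B is the vertex set of a P3-packing P, no vertex of A is adjacent to a vertex of Z, and |Z| ≤ 5·γ(G[Z]) where γ(G[Z]) is the minimum size of a 3-path vertex cover of G[Z]. Then the number of 3-paths in P is at most k − |Z|/5. -/

import Mathlib

open Finset

variable {V : Type*}

/-- vertex set of an (ordered) 3-path -/
def TripSet [DecidableEq V] (t : V × V × V) : Finset V := {t.1, t.2.1, t.2.2}

/-- a P3-packing: a collection of vertex-disjoint paths on three vertices -/
def IsP3Packing [DecidableEq V] (G : SimpleGraph V) (P : Finset (V × V × V)) : Prop :=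
  (∀ t ∈ P, G.Adj t.1 t.2.1 ∧ G.Adj t.2.1 t.2.2 ∧ t.1 ≠ t.2.2) ∧
  (∀ t ∈ P, ∀ s ∈ P, t ≠ s → Disjoint (TripSet t) (TripSet s))

/-- `D` is a 3-path vertex cover of the induced subgraph `G[S]` -/
def IsP3VCOn (G : SimpleGraph V) (S D : Finset V) : Prop :=
  ∀ a b c : V, a ∈ S → b ∈ S → c ∈ S → G.Adj a b → G.Adj b c → a ≠ c →
    a ∈ D ∨ b ∈ D ∨ c ∈ D

def IsP3VC (G : SimpleGraph V) (C : Finset V) : Prop :=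
  ∀ a b c : V, G.Adj a b → G.Adj b c → a ≠ c → a ∈ C ∨ b ∈ C ∨ c ∈ C

def NSet [Fintype V] [DecidableEq V] (G : SimpleGraph V) [DecidableRel G.Adj]
    (S : Finset V) : Finset V :=
  Finset.univ.filter (fun w => w ∉ S ∧ ∃ x ∈ S, G.Adj w x)

/-- a good decomposition `(I, C, R)` of `G` -/
def IsGoodDecomp [Fintype V] [DecidableEq V] (G : SimpleGraph V) [DecidableRel G.Adj]
    (I C R : Finset V) : Prop :=
  (I ∪ C ∪ R = Finset.univ) ∧ Disjoint I C ∧ Disjoint I R ∧ Disjoint C R ∧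
  (∀ a ∈ I, (I.filter (fun b => G.Adj a b)).card ≤ 1) ∧
  (∃ P : Finset (V × V × V), IsP3Packing G P ∧ (∀ t ∈ P, TripSet t ⊆ I ∪ C) ∧
    P.card = C.card) ∧
  (∀ a ∈ I, ∀ b ∈ R, ¬ G.Adj a b)

/-- given a partition `(A, B, Z)` with `B = V(P)` for a
P3-packing `P`, no edges between `A` and `Z`, and `|Z| ≤ 5·γ(G[Z])`, if `G`
has a 3-path vertex cover of size at most `k` then `|P| ≤ k - |Z|/5`
(equivalently `5|P| + |Z| ≤ 5k`). -/
theorem stmt13 [Fintype V] [DecidableEq V] (G : SimpleGraph V) [DecidableRel G.Adj]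
    (k : ℕ) (A B Z : Finset V)
    (hunion : A ∪ B ∪ Z = Finset.univ)
    (hAB : Disjoint A B) (hAZ : Disjoint A Z) (hBZ : Disjoint B Z)
    (P : Finset (V × V × V)) (hP : IsP3Packing G P)
    (hB : B = P.biUnion TripSet)
    (hnoadj : ∀ a ∈ A, ∀ z ∈ Z, ¬ G.Adj a z)
    (hgamma : ∀ D : Finset V, D ⊆ Z → IsP3VCOn G Z D → Z.card ≤ 5 * D.card)
    (hcover : ∃ C : Finset V, IsP3VC G C ∧ C.card ≤ k) :
    5 * P.card + Z.card ≤ 5 * k := by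
  obtain ⟨C, hC, hCk⟩ := hcover
  classical
  -- each triple contains a cover vertex
  have hne : ∀ t ∈ P, (C ∩ TripSet t).Nonempty := by
    intro t ht
    obtain ⟨h1, h2, h3⟩ := hP.1 t ht
    rcases hC t.1 t.2.1 t.2.2 h1 h2 h3 with h | h | h
    · exact ⟨t.1, by simp [TripSet, h]⟩
    · exact ⟨t.2.1, by simp [TripSet, h]⟩
    · exact ⟨t.2.2, by simp [TripSet, h]⟩
  have hPB : P.card ≤ (C ∩ B).card := by
    apply Finset.card_le_card_of_injOn
      (fun t => if h : (C ∩ TripSet t).Nonempty then h.choose else t.1)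
    · intro t ht
      have h := hne t ht
      simp only [dif_pos h]
      have hmem := h.choose_spec
      simp only [Finset.mem_coe, Finset.mem_inter] at hmem ⊢
      refine ⟨hmem.1, ?_⟩
      rw [hB]
      exact Finset.mem_biUnion.2 ⟨t, ht, hmem.2⟩
    · intro t ht s hs heq
      by_contra hts
      have h1 := hne t ht
      have h2 := hne s hs
      simp only [dif_pos h1, dif_pos h2] at heq
      have m1 := h1.choose_spec
      have m2 := h2.choose_spec
      simp only [Finset.mem_inter] at m1 m2
      have hd := hP.2 t ht s hs hts
      exact (Finset.disjoint_left.1 hd) m1.2 (heq ▸ m2.2)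
  have hZ5 : Z.card ≤ 5 * (C ∩ Z).card := by
    apply hgamma
    · exact Finset.inter_subset_right
    · intro a b c ha hb hc hab hbc hac
      rcases hC a b c hab hbc hac with h | h | h
      · exact Or.inl (Finset.mem_inter.2 ⟨h, ha⟩)
      · exact Or.inr (Or.inl (Finset.mem_inter.2 ⟨h, hb⟩))
      · exact Or.inr (Or.inr (Finset.mem_inter.2 ⟨h, hc⟩))
  have hdisj : Disjoint (C ∩ B) (C ∩ Z) :=
    (hBZ.mono Finset.inter_subset_right Finset.inter_subset_right)
  have hsum : (C ∩ B).card + (C ∩ Z).card ≤ C.card := by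
    rw [← Finset.card_union_of_disjoint hdisj]
    exact Finset.card_le_card (Finset.union_subset Finset.inter_subset_left
      Finset.inter_subset_left)
  omega
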